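/- Let (P₀, …, P_m) be a Clifford system of rank m+1 ≥ 2 on ℝ^{2l} with Cartan–Münzner polynomial F. Then F satisfies the second Cartan–Münzner equation: its Laplacian ΔF(x) = ∑_{k=1}^{2l} ∂²F/∂x_k²(x) equals 8·(m₂ − m₁)·‖x‖² for all x ∈ ℝ^{2l}, where m₁ = m and m₂ = l − m − 1. -/

import Mathlib

open Matrix RealInnerProductSpace

/-- A Clifford system of rank `m` on `ℝ^n`. -/
def IsCliffordSystem {n : Type*} [Fintype n] [DecidableEq n] {m : ℕ}
    (P : Fin m → Matrix n n ℝ) : Prop :=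
  (∀ i, (P i)ᵀ = P i) ∧
  ∀ i j, P i * P j + P j * P i = (if i = j then (2 : ℝ) else 0) • (1 : Matrix n n ℝ)

/-- The Cartan–Münzner polynomial of a Clifford system, on Euclidean space. -/
noncomputable def CMPolyE {n : Type*} [Fintype n] [DecidableEq n] {m : ℕ}
    (P : Fin m → Matrix n n ℝ) (x : EuclideanSpace ℝ n) : ℝ :=
  ⟪x, x⟫ ^ 2 - 2 * ∑ i, ⟪Matrix.toEuclideanLin (P i) x, x⟫ ^ 2

/-- The Laplacian of `F : ℝ^N → ℝ`: the sum of its pure second partial derivatives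
in the standard coordinates. -/
noncomputable def laplacian {N : ℕ} (F : EuclideanSpace ℝ (Fin N) → ℝ)
    (x : EuclideanSpace ℝ (Fin N)) : ℝ :=
  ∑ k : Fin N, fderiv ℝ (fun y => fderiv ℝ F y (EuclideanSpace.single k 1)) x
    (EuclideanSpace.single k 1)

section Helpers

variable {E : Type*} [NormedAddCommGroup E] [InnerProductSpace ℝ E]

private lemma cm_diff_inner_self (B : E →L[ℝ] E) :
    Differentiable ℝ (fun x : E => ⟪B x, x⟫) :=
  B.differentiable.inner ℝ differentiable_id

private lemma cm_d1 (B : E →L[ℝ] E) (z v : E) :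
    fderiv ℝ (fun x => ⟪B x, x⟫) z v = ⟪B z, v⟫ + ⟪B v, z⟫ := by
  rw [fderiv_inner_apply ℝ B.differentiable.differentiableAt differentiableAt_fun_id]
  simp [B.fderiv]

private lemma cm_dsq (B : E →L[ℝ] E) (z v : E) :
    fderiv ℝ (fun x => ⟪B x, x⟫ ^ 2) z v
      = 2 * ⟪B z, z⟫ * (⟪B z, v⟫ + ⟪B v, z⟫) := by
  have h : (fun x : E => ⟪B x, x⟫ ^ 2) = fun x => ⟪B x, x⟫ * ⟪B x, x⟫ := by
    funext x; ring
  rw [h, fderiv_fun_mul (cm_diff_inner_self B z) (cm_diff_inner_self B z)]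
  simp only [ContinuousLinearMap.add_apply, ContinuousLinearMap.smul_apply, smul_eq_mul, cm_d1]
  ring

private lemma cm_diff_lin (B : E →L[ℝ] E) (v : E) :
    Differentiable ℝ (fun y : E => ⟪B y, v⟫ + ⟪B v, y⟫) :=
  (B.differentiable.inner ℝ (differentiable_const v)).add
    ((differentiable_const (B v)).inner ℝ differentiable_id)

private lemma cm_d1lin (B : E →L[ℝ] E) (v x : E) :
    fderiv ℝ (fun y : E => ⟪B y, v⟫ + ⟪B v, y⟫) x v = 2 * ⟪B v, v⟫ := by
  have h1 : Differentiable ℝ (fun y : E => ⟪B y, v⟫) :=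
    B.differentiable.inner ℝ (differentiable_const v)
  have h2 : Differentiable ℝ (fun y : E => ⟪B v, y⟫) :=
    (differentiable_const (B v)).inner ℝ differentiable_id
  rw [fderiv_fun_add (h1 x) (h2 x), ContinuousLinearMap.add_apply,
    fderiv_inner_apply ℝ B.differentiable.differentiableAt (differentiableAt_const v),
    fderiv_inner_apply ℝ (differentiableAt_const (B v)) differentiableAt_fun_id]
  simp [B.fderiv]
  ring

private lemma cm_diff_core (B : E →L[ℝ] E) (v : E) :
    Differentiable ℝ (fun y : E => 2 * ⟪B y, y⟫ * (⟪B y, v⟫ + ⟪B v, y⟫)) :=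
  ((cm_diff_inner_self B).const_mul 2).mul (cm_diff_lin B v)

private lemma cm_d2core (B : E →L[ℝ] E) (x v : E) :
    fderiv ℝ (fun y : E => 2 * ⟪B y, y⟫ * (⟪B y, v⟫ + ⟪B v, y⟫)) x v
      = 2 * (⟪B x, v⟫ + ⟪B v, x⟫) ^ 2 + 4 * ⟪B x, x⟫ * ⟪B v, v⟫ := by
  have h1 : Differentiable ℝ (fun y : E => 2 * ⟪B y, y⟫) :=
    (cm_diff_inner_self B).const_mul 2
  rw [fderiv_fun_mul (h1 x) (cm_diff_lin B v x), ContinuousLinearMap.add_apply,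
    ContinuousLinearMap.smul_apply, ContinuousLinearMap.smul_apply, smul_eq_mul, smul_eq_mul,
    cm_d1lin]
  have h3 : fderiv ℝ (fun y : E => 2 * ⟪B y, y⟫) x v = 2 * (⟪B x, v⟫ + ⟪B v, x⟫) := by
    rw [fderiv_const_mul (cm_diff_inner_self B x) 2, ContinuousLinearMap.smul_apply, smul_eq_mul]
    rw [fderiv_inner_apply ℝ B.differentiable.differentiableAt differentiableAt_fun_id]
    simp [B.fderiv]
  rw [h3]
  ring

/-- First derivative of the Cartan–Münzner style polynomial. -/
private lemma cm_dF {n : ℕ} (A : Fin n → E →L[ℝ] E) (y v : E) :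
    fderiv ℝ (fun x : E =>
        ⟪(ContinuousLinearMap.id ℝ E) x, x⟫ ^ 2 - 2 * ∑ i, ⟪A i x, x⟫ ^ 2) y v
      = 2 * ⟪y, y⟫ * (⟪y, v⟫ + ⟪v, y⟫)
        - 2 * ∑ i, 2 * ⟪A i y, y⟫ * (⟪A i y, v⟫ + ⟪A i v, y⟫) := by
  have hd1 : ∀ B : E →L[ℝ] E, Differentiable ℝ (fun x : E => ⟪B x, x⟫ ^ 2) :=
    fun B => (cm_diff_inner_self B).pow 2
  have hsum : DifferentiableAt ℝ (fun x : E => ∑ i, ⟪A i x, x⟫ ^ 2) y :=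
    DifferentiableAt.fun_sum fun i _ => (hd1 (A i)) y
  rw [fderiv_fun_sub ((hd1 (ContinuousLinearMap.id ℝ E)) y) (hsum.const_mul 2),
    ContinuousLinearMap.sub_apply, cm_dsq,
    fderiv_const_mul hsum 2, ContinuousLinearMap.smul_apply, smul_eq_mul,
    fderiv_fun_sum (fun i _ => (hd1 (A i)) y), ContinuousLinearMap.sum_apply]
  simp only [cm_dsq, ContinuousLinearMap.id_apply]

/-- Second derivative. -/
private lemma cm_d2F {n : ℕ} (A : Fin n → E →L[ℝ] E) (x v : E) :
    fderiv ℝ (fun y : E => 2 * ⟪y, y⟫ * (⟪y, v⟫ + ⟪v, y⟫)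
        - 2 * ∑ i, 2 * ⟪A i y, y⟫ * (⟪A i y, v⟫ + ⟪A i v, y⟫)) x v
      = (2 * (⟪x, v⟫ + ⟪v, x⟫) ^ 2 + 4 * ⟪x, x⟫ * ⟪v, v⟫)
        - 2 * ∑ i, (2 * (⟪A i x, v⟫ + ⟪A i v, x⟫) ^ 2 + 4 * ⟪A i x, x⟫ * ⟪A i v, v⟫) := by
  have hid := cm_d2core (ContinuousLinearMap.id ℝ E) x v
  simp only [ContinuousLinearMap.id_apply] at hid
  have hsum : DifferentiableAt ℝ
      (fun y : E => ∑ i, 2 * ⟪A i y, y⟫ * (⟪A i y, v⟫ + ⟪A i v, y⟫)) x :=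
    DifferentiableAt.fun_sum fun i _ => (cm_diff_core (A i) v) x
  have hd0 : DifferentiableAt ℝ (fun y : E => 2 * ⟪y, y⟫ * (⟪y, v⟫ + ⟪v, y⟫)) x :=
    (cm_diff_core (ContinuousLinearMap.id ℝ E) v) x
  rw [fderiv_fun_sub hd0 (hsum.const_mul 2),
    ContinuousLinearMap.sub_apply, hid,
    fderiv_const_mul hsum 2, ContinuousLinearMap.smul_apply, smul_eq_mul,
    fderiv_fun_sum (fun i _ => (cm_diff_core (A i) v) x), ContinuousLinearMap.sum_apply]
  simp only [cm_d2core, ContinuousLinearMap.id_apply]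

end Helpers

/-- The Cartan–Münzner polynomial `F` of a Clifford system of rank `m+1 ≥ 2` on `ℝ^{2l}`
satisfies the second Cartan–Münzner equation: `ΔF(x) = 8(m₂ − m₁)‖x‖²`, where
`m₁ = m` and `m₂ = l − m − 1`. -/
theorem CMPoly_second_CartanMunzner_equation
    {l m : ℕ} (hl : 1 ≤ l) (hm : 1 ≤ m)
    (P : Fin (m + 1) → Matrix (Fin (2 * l)) (Fin (2 * l)) ℝ)
    (hP : IsCliffordSystem P) :
    ∀ x : EuclideanSpace ℝ (Fin (2 * l)),
      laplacian (CMPolyE P) x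
        = 8 * (((l : ℝ) - (m : ℝ) - 1) - (m : ℝ)) * ‖x‖ ^ 2 := by
  intro x
  set A : Fin (m + 1) → (EuclideanSpace ℝ (Fin (2 * l)) →L[ℝ] EuclideanSpace ℝ (Fin (2 * l))) :=
    fun i => LinearMap.toContinuousLinearMap (Matrix.toEuclideanLin (P i)) with hA
  have hAapp : ∀ i (y : EuclideanSpace ℝ (Fin (2 * l))),
      A i y = Matrix.toEuclideanLin (P i) y := fun i y => rfl
  -- each P i squares to the identity
  have hPsq : ∀ i, P i * P i = 1 := by
    intro i
    have h := hP.2 i i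
    rw [if_pos rfl] at h
    have h2 : (2 : ℝ) • (P i * P i) = (2 : ℝ) • (1 : Matrix (Fin (2*l)) (Fin (2*l)) ℝ) := by
      rw [two_smul]; exact h
    exact smul_right_injective _ two_ne_zero h2
  have hAsq : ∀ i (y : EuclideanSpace ℝ (Fin (2 * l))), A i (A i y) = y := by
    intro i y
    have h : Matrix.toEuclideanLin (P i) (Matrix.toEuclideanLin (P i) y)
        = Matrix.toEuclideanLin (P i * P i) y := by
      simp [Matrix.toEuclideanLin_apply, Matrix.mulVec_mulVec]
    rw [hAapp, hAapp, h, hPsq]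
    simp [Matrix.toEuclideanLin_apply]
  -- each A i is symmetric
  have hsym : ∀ i (u w : EuclideanSpace ℝ (Fin (2 * l))), ⟪A i u, w⟫ = ⟪u, A i w⟫ := by
    intro i u w
    have hherm : (P i).IsHermitian := by
      rw [Matrix.IsHermitian, Matrix.conjTranspose]
      ext a b
      simpa using congrFun (congrFun (hP.1 i) a) b
    exact (Matrix.isHermitian_iff_isSymmetric.1 hherm) u w
  -- trace of each P i vanishes
  have htr : ∀ i, (P i).trace = 0 := by
    intro i
    obtain ⟨j, hij⟩ : ∃ j : Fin (m + 1), j ≠ i := by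
      by_cases h0 : i = ⟨0, by omega⟩
      · exact ⟨⟨1, by omega⟩, by simp [h0, Fin.ext_iff]⟩
      · exact ⟨⟨0, by omega⟩, fun h => h0 h.symm⟩
    have hanti : P i * P j + P j * P i = 0 := by
      have h := hP.2 i j
      rw [if_neg (fun h' => hij h'.symm), zero_smul] at h
      exact h
    have hneg : P j * P i = -(P i * P j) :=
      eq_neg_of_add_eq_zero_right hanti
    have key : (P i).trace = -(P i).trace := by
      calc (P i).trace = ((P j * P j) * P i).trace := by rw [hPsq, one_mul]
        _ = (P j * (P j * P i)).trace := by rw [mul_assoc]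
        _ = ((P j * P i) * P j).trace := Matrix.trace_mul_comm _ _
        _ = (-(P i * P j) * P j).trace := by rw [hneg]
        _ = -((P i * P j) * P j).trace := by rw [neg_mul, Matrix.trace_neg]
        _ = -(P i).trace := by rw [mul_assoc, hPsq, mul_one]
    linarith
  -- rewrite F in canonical form
  have hF : CMPolyE P = fun y : EuclideanSpace ℝ (Fin (2 * l)) =>
      ⟪(ContinuousLinearMap.id ℝ (EuclideanSpace ℝ (Fin (2 * l)))) y, y⟫ ^ 2
        - 2 * ∑ i, ⟪A i y, y⟫ ^ 2 := by
    funext y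
    simp only [CMPolyE, ContinuousLinearMap.id_apply, hA,
      LinearMap.coe_toContinuousLinearMap']
  -- notation for basis vectors
  set e : Fin (2 * l) → EuclideanSpace ℝ (Fin (2 * l)) :=
    fun k => EuclideanSpace.single k (1 : ℝ) with he
  -- the second partial derivatives
  have key : ∀ k : Fin (2 * l),
      fderiv ℝ (fun y => fderiv ℝ (CMPolyE P) y (e k)) x (e k)
        = (2 * (⟪x, e k⟫ + ⟪e k, x⟫) ^ 2 + 4 * ⟪x, x⟫ * ⟪e k, e k⟫)
          - 2 * ∑ i, (2 * (⟪A i x, e k⟫ + ⟪A i (e k), x⟫) ^ 2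
              + 4 * ⟪A i x, x⟫ * ⟪A i (e k), e k⟫) := by
    intro k
    have h1 : (fun y => fderiv ℝ (CMPolyE P) y (e k))
        = fun y => 2 * ⟪y, y⟫ * (⟪y, e k⟫ + ⟪e k, y⟫)
            - 2 * ∑ i, 2 * ⟪A i y, y⟫ * (⟪A i y, e k⟫ + ⟪A i (e k), y⟫) := by
      funext y
      rw [hF, cm_dF]
    rw [h1, cm_d2F]
  -- sum identities
  have s1 : ∀ y : EuclideanSpace ℝ (Fin (2 * l)), ∑ k : Fin (2 * l), ⟪y, e k⟫ ^ 2 = ⟪y, y⟫ := by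
    intro y
    simp [he, EuclideanSpace.inner_single_right, PiLp.inner_apply, RCLike.inner_apply, pow_two]
    rw [EuclideanSpace.norm_eq, Real.mul_self_sqrt (by positivity)]
    simp [Real.norm_eq_abs, sq]
  have s2 : ∀ i, ∑ k : Fin (2 * l), ⟪A i (e k), e k⟫ = 0 := by
    intro i
    have h : ∑ k : Fin (2 * l), ⟪A i (e k), e k⟫ = (P i).trace := by
      simp only [hAapp, he]
      simp [EuclideanSpace.inner_single_right, Matrix.toEuclideanLin_apply, Matrix.trace]
    rw [h, htr]
  have s3 : ∀ i, ∑ k : Fin (2 * l), ⟪A i x, e k⟫ ^ 2 = ⟪x, x⟫ := by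
    intro i
    rw [s1 (A i x), hsym, hAsq]
  have s4 : ∀ k, ⟪e k, e k⟫ = (1 : ℝ) := by
    intro k
    simp [he, EuclideanSpace.inner_single_right]
  -- assemble
  have hlap : laplacian (CMPolyE P) x
      = ∑ k : Fin (2 * l),
        ((2 * (⟪x, e k⟫ + ⟪e k, x⟫) ^ 2 + 4 * ⟪x, x⟫ * ⟪e k, e k⟫)
          - 2 * ∑ i, (2 * (⟪A i x, e k⟫ + ⟪A i (e k), x⟫) ^ 2
              + 4 * ⟪A i x, x⟫ * ⟪A i (e k), e k⟫)) := by
    unfold laplacian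
    exact Finset.sum_congr rfl fun k _ => key k
  rw [hlap]
  have hcomm : ∀ k, ⟪e k, x⟫ = ⟪x, e k⟫ := fun k => real_inner_comm _ _
  have hsymk : ∀ i k, ⟪A i (e k), x⟫ = ⟪A i x, e k⟫ := by
    intro i k
    rw [hsym, real_inner_comm]
  -- simplify the summand
  have hstep : ∑ k : Fin (2 * l),
      ((2 * (⟪x, e k⟫ + ⟪e k, x⟫) ^ 2 + 4 * ⟪x, x⟫ * ⟪e k, e k⟫)
        - 2 * ∑ i, (2 * (⟪A i x, e k⟫ + ⟪A i (e k), x⟫) ^ 2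
            + 4 * ⟪A i x, x⟫ * ⟪A i (e k), e k⟫))
      = ∑ k : Fin (2 * l),
        ((8 * ⟪x, e k⟫ ^ 2 + 4 * ⟪x, x⟫)
          - ∑ i, (16 * ⟪A i x, e k⟫ ^ 2 + 8 * ⟪A i x, x⟫ * ⟪A i (e k), e k⟫)) := by
    refine Finset.sum_congr rfl fun k _ => ?_
    rw [hcomm k, s4 k, Finset.mul_sum]
    congr 1
    · ring
    refine Finset.sum_congr rfl fun i _ => ?_
    rw [hsymk i k]
    ring
  rw [hstep]
  have hexpand : ∑ k : Fin (2 * l),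
      ((8 * ⟪x, e k⟫ ^ 2 + 4 * ⟪x, x⟫)
        - ∑ i, (16 * ⟪A i x, e k⟫ ^ 2 + 8 * ⟪A i x, x⟫ * ⟪A i (e k), e k⟫))
      = (8 * ⟪x, x⟫ + (2 * l : ℕ) * (4 * ⟪x, x⟫))
        - ∑ i : Fin (m + 1), 16 * ⟪x, x⟫ := by
    rw [Finset.sum_sub_distrib, Finset.sum_add_distrib, Finset.sum_comm]
    congr 1
    · rw [← Finset.mul_sum, s1, Finset.sum_const, Finset.card_univ, Fintype.card_fin,
        nsmul_eq_mul]
    refine Finset.sum_congr rfl fun i _ => ?_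
    rw [Finset.sum_add_distrib, ← Finset.mul_sum, s3, ← Finset.mul_sum, s2, mul_zero, add_zero]
  rw [hexpand, Finset.sum_const, Finset.card_univ, Fintype.card_fin, nsmul_eq_mul]
  rw [real_inner_self_eq_norm_sq]
  push_cast
  ring
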